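/- Let F be a free group and R a normal subgroup of F such that the quotient group F/R is finite, and let k ≥ 1. Then the quotient group (R ∩ γ_{k+1}(F))/γ_{k+1}(R, F) is finite. -/

import Mathlib

/-- The relative lower central series `γ_{k+1}(R, F)`: `γ₁(R, F) = R` and
`γ_{k+1}(R, F) = [γ_k(R, F), F]`, so `relLowerCentralSeries R k = γ_{k+1}(R, F)`. -/
def relLowerCentralSeries {F : Type*} [Group F] (R : Subgroup F) : ℕ → Subgroup F
  | 0 => R
  | k + 1 => ⁅relLowerCentralSeries R k, (⊤ : Subgroup F)⁆

open Subgroup QuotientGroup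
open scoped commutatorElement

section Helpers

variable {G : Type*} {G' : Type*} [Group G] [Group G']

/-- The image of a finite subgroup is finite. -/
lemma finite_subgroup_map (f : G →* G') (H : Subgroup G) (h : Finite H) :
    Finite (H.map f) := by
  have h1 : (H : Set G).Finite := Set.finite_coe_iff.mp h
  have h2 : ((H.map f : Subgroup G') : Set G').Finite := by
    rw [Subgroup.coe_map]; exact h1.image f
  exact h2.to_subtype

lemma finite_subgroup_of_le {H K : Subgroup G} (hK : Finite K) (hle : H ≤ K) : Finite H :=
  haveI := hK
  Finite.of_injective (Subgroup.inclusion hle) (Subgroup.inclusion_injective hle)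

/-- Push finiteness of a quotient along a surjective homomorphism. -/
lemma finite_quotient_map (f : G →* G') (hf : Function.Surjective f)
    (A : Subgroup G) [A.Normal] (B : Subgroup G') [B.Normal]
    (hAB : A ≤ B.comap f) (h : Finite (G ⧸ A)) : Finite (G' ⧸ B) := by
  haveI := h
  refine Finite.of_surjective (QuotientGroup.map A B f hAB) ?_
  intro q
  obtain ⟨g', rfl⟩ := QuotientGroup.mk'_surjective B q
  obtain ⟨g, rfl⟩ := hf g'
  exact ⟨QuotientGroup.mk g, by rw [QuotientGroup.map_mk, QuotientGroup.mk'_apply]⟩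

/-- If the kernel of `f` is finite, contained in `W`, and the image of `W` is finite,
then `W` is finite. -/
lemma finite_of_finite_ker_of_finite_map (f : G →* G') {W : Subgroup G}
    (hker : Finite f.ker) (hle : f.ker ≤ W) (hmap : Finite (W.map f)) : Finite W := by
  let g : ↥W →* G' := f.comp W.subtype
  have hk : g.ker = f.ker.comap W.subtype := (MonoidHom.comap_ker f W.subtype).symm
  have hkfin : Finite g.ker := by
    rw [hk]
    haveI := hker
    exact Finite.of_equiv _ (Subgroup.subgroupOfEquivOfLe hle).symm.toEquiv
  have hrange : g.range = W.map f := by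
    rw [MonoidHom.range_comp, Subgroup.range_subtype]
  have hrfin : Finite g.range := by rw [hrange]; exact hmap
  have hqfin : Finite (↥W ⧸ g.ker) :=
    Finite.of_equiv _ (QuotientGroup.quotientKerEquivRange g).symm.toEquiv
  exact Finite.of_equiv _ (Subgroup.groupEquivQuotientProdSubgroup (s := g.ker)).symm

lemma map_lowerCentralSeries (f : G →* G') (hf : Function.Surjective f) :
    ∀ n, ((⊤ : Subgroup G).lowerCentralSeries n).map f = (⊤ : Subgroup G').lowerCentralSeries n
  | 0 => by
    rw [Subgroup.lowerCentralSeries_zero, Subgroup.lowerCentralSeries_zero]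
    exact Subgroup.map_top_of_surjective f hf
  | n + 1 => by
    show Subgroup.map f ⁅(⊤ : Subgroup G).lowerCentralSeries n, ⊤⁆ = ⁅(⊤ : Subgroup G').lowerCentralSeries n, ⊤⁆
    rw [Subgroup.map_commutator, map_lowerCentralSeries f hf n,
      Subgroup.map_top_of_surjective f hf]

lemma map_relLowerCentralSeries (f : G →* G') (hf : Function.Surjective f) (R : Subgroup G) :
    ∀ n, (relLowerCentralSeries R n).map f = relLowerCentralSeries (R.map f) n
  | 0 => rfl
  | n + 1 => by
    show Subgroup.map f ⁅relLowerCentralSeries R n, ⊤⁆ = ⁅relLowerCentralSeries (R.map f) n, ⊤⁆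
    rw [Subgroup.map_commutator, map_relLowerCentralSeries f hf R n,
      Subgroup.map_top_of_surjective f hf]

lemma relLowerCentralSeries_normal (R : Subgroup G) [R.Normal] :
    ∀ k, (relLowerCentralSeries R k).Normal
  | 0 => ‹R.Normal›
  | k + 1 => by
    haveI := relLowerCentralSeries_normal R k
    exact Subgroup.commutator_normal _ _

lemma relLowerCentralSeries_le_left (R : Subgroup G) [R.Normal] :
    ∀ k, relLowerCentralSeries R k ≤ R
  | 0 => le_rfl
  | k + 1 => by
    haveI := relLowerCentralSeries_normal R k
    exact le_trans (Subgroup.commutator_le_left _ _) (relLowerCentralSeries_le_left R k)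

lemma relLowerCentralSeries_shift (H : Subgroup G) :
    ∀ n, relLowerCentralSeries H (n + 1) = relLowerCentralSeries ⁅H, (⊤ : Subgroup G)⁆ n
  | 0 => rfl
  | n + 1 => by
    show ⁅relLowerCentralSeries H (n + 1), ⊤⁆ = ⁅relLowerCentralSeries ⁅H, ⊤⁆ n, ⊤⁆
    rw [relLowerCentralSeries_shift H n]

lemma le_upperCentralSeries_of_relLowerCentralSeries_eq_bot :
    ∀ (n : ℕ) (H : Subgroup G), relLowerCentralSeries H n = ⊥ → H ≤ Subgroup.upperCentralSeries G n
  | 0, H, h => h.le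
  | n + 1, H, h => by
    have h1 : ⁅H, (⊤ : Subgroup G)⁆ ≤ Subgroup.upperCentralSeries G n :=
      le_upperCentralSeries_of_relLowerCentralSeries_eq_bot n _
        ((relLowerCentralSeries_shift H n).symm.trans h)
    intro x hx
    rw [Subgroup.mem_upperCentralSeries_succ_iff]
    intro y
    exact h1 (Subgroup.commutator_mem_commutator hx (Subgroup.mem_top y))

/-- A commutator is unchanged when multiplying the first argument by a central element and
the second argument by an element commuting with the first. -/
lemma commutatorElement_mul_central {x y z c : G} (hz : ∀ g, z * g = g * z)
    (hc : c * x⁻¹ = x⁻¹ * c) : ⁅x * z, y * c⁆ = ⁅x, y⁆ := by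
  have hz2 : ∀ g h : G, z * (g * h) = g * (z * h) := fun g h => by
    rw [← mul_assoc, hz g, mul_assoc]
  have hc2 : ∀ h : G, c * (x⁻¹ * h) = x⁻¹ * (c * h) := fun h => by
    rw [← mul_assoc, hc, mul_assoc]
  simp only [commutatorElement_def, mul_inv_rev, mul_assoc]
  rw [hz2, hz2, mul_inv_cancel_left, hc2, mul_inv_cancel_left]

/-- Finiteness of the set of commutators `⁅x, y⁆` with `x ∈ K`, `y ∈ H`, given that
`K` is finite modulo the center and `H` has finitely many cosets of a subgroup `C`
centralizing `K`. -/
lemma finite_commutator_pairs (K H C : Subgroup G)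
    (hC : ∀ c ∈ C, ∀ x ∈ K, c * x = x * c)
    (h1 : Finite (K.map (QuotientGroup.mk' (center G))))
    (h2 : Finite (↥H ⧸ C.subgroupOf H)) :
    {g : G | ∃ x ∈ K, ∃ y ∈ H, ⁅x, y⁆ = g}.Finite := by
  haveI := h1; haveI := h2
  set π := QuotientGroup.mk' (center G) with hπ
  let θ : ↥K → ↥(K.map π) := fun x => ⟨π x, Subgroup.mem_map_of_mem π x.2⟩
  have hθs : Function.Surjective θ := by
    rintro ⟨_, x, hx, rfl⟩; exact ⟨⟨x, hx⟩, rfl⟩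
  have hμs : Function.Surjective (QuotientGroup.mk : ↥H → ↥H ⧸ C.subgroupOf H) :=
    fun q => Quotient.inductionOn' q (fun y => ⟨y, rfl⟩)
  let f : ↥(K.map π) × (↥H ⧸ C.subgroupOf H) → G := fun p =>
    ⁅((Function.surjInv hθs p.1 : ↥K) : G), ((Function.surjInv hμs p.2 : ↥H) : G)⁆
  apply Set.Finite.subset (Set.finite_range f)
  rintro g ⟨x, hx, y, hy, rfl⟩
  refine ⟨(θ ⟨x, hx⟩, QuotientGroup.mk ⟨y, hy⟩), ?_⟩
  set x' : ↥K := Function.surjInv hθs (θ ⟨x, hx⟩) with hx'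
  set y' : ↥H := Function.surjInv hμs (QuotientGroup.mk ⟨y, hy⟩) with hy'
  have h3 : π (x' : G) = π x :=
    congrArg Subtype.val (Function.surjInv_eq hθs (θ ⟨x, hx⟩))
  have h4 : (x : G)⁻¹ * x' ∈ Subgroup.center G := by
    have hmk : ((x : G) : G ⧸ Subgroup.center G) = ((x' : G) : G ⧸ Subgroup.center G) := by
      simpa [hπ, QuotientGroup.mk'_apply] using h3.symm
    exact QuotientGroup.eq.mp hmk
  have h5 : (QuotientGroup.mk y' : ↥H ⧸ C.subgroupOf H) = QuotientGroup.mk ⟨y, hy⟩ :=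
    Function.surjInv_eq hμs _
  have h6 : (y : G)⁻¹ * y' ∈ C := by
    have h7 := QuotientGroup.eq.mp h5.symm
    rw [Subgroup.mem_subgroupOf] at h7
    simpa using h7
  have hxeq : (x' : G) = x * (x⁻¹ * x') := by rw [mul_inv_cancel_left]
  have hyeq : (y' : G) = y * (y⁻¹ * y') := by rw [mul_inv_cancel_left]
  show ⁅(x' : G), (y' : G)⁆ = ⁅x, y⁆
  rw [hxeq, hyeq]
  exact commutatorElement_mul_central
    (fun g => (Subgroup.mem_center_iff.mp h4 g).symm)
    (hC _ h6 _ (inv_mem hx))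

/-- If `K` is finite modulo a normal subgroup `N` contained in `C`, then `K` has finitely
many cosets of `C.subgroupOf K`. -/
lemma finite_quotient_subgroupOf (K C N : Subgroup G) [N.Normal] (hN : N ≤ C)
    (h : Finite (K.map (QuotientGroup.mk' N))) : Finite (↥K ⧸ C.subgroupOf K) := by
  haveI := h
  let θ := (QuotientGroup.mk' N).subgroupMap K
  have hθ : Function.Surjective θ := MonoidHom.subgroupMap_surjective _ _
  have hker : θ.ker = N.subgroupOf K := by
    ext x
    simp only [MonoidHom.mem_ker, Subgroup.mem_subgroupOf]
    constructor
    · intro hx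
      have hx1 : QuotientGroup.mk' N (x : G) = 1 := congrArg Subtype.val hx
      rwa [QuotientGroup.mk'_apply, QuotientGroup.eq_one_iff] at hx1
    · intro hx
      apply Subtype.ext
      show QuotientGroup.mk' N (x : G) = 1
      rw [QuotientGroup.mk'_apply, QuotientGroup.eq_one_iff]
      exact hx
  have h1 : Finite (↥K ⧸ θ.ker) :=
    Finite.of_equiv _ (QuotientGroup.quotientKerEquivOfSurjective θ hθ).symm.toEquiv
  rw [hker] at h1
  have hle2 : N.subgroupOf K ≤ C.subgroupOf K := fun x hx => by
    rw [Subgroup.mem_subgroupOf] at hx ⊢; exact hN hx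
  haveI := h1
  refine Finite.of_surjective (Subgroup.quotientMapOfLE hle2) ?_
  intro q
  refine Quotient.inductionOn' q (fun y => ?_)
  exact ⟨QuotientGroup.mk y, Subgroup.quotientMapOfLE_apply_mk hle2 y⟩

end Helpers

section UpperLower

universe u

/-- `⁅γ_{k+1}(G), Z_{k+1}(G)⁆ = 1`. -/
lemma commutator_lcs_ucs_eq_bot (k : ℕ) :
    ∀ (G : Type u) [Group G],
      ⁅(⊤ : Subgroup G).lowerCentralSeries k, Subgroup.upperCentralSeries G (k + 1)⁆ = ⊥ := by
  induction k with
  | zero =>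
    intro G _
    rw [Subgroup.upperCentralSeries_one, Subgroup.lowerCentralSeries_zero, Subgroup.commutator_comm,
      Subgroup.commutator_eq_bot_iff_le_centralizer]
    exact Subgroup.center_le_centralizer _
  | succ k ih =>
    intro G _
    set Z := Subgroup.center G
    set π := QuotientGroup.mk' Z with hπdef
    have hπs : Function.Surjective π := QuotientGroup.mk'_surjective Z
    have hcomap : Subgroup.comap π (Subgroup.upperCentralSeries (G ⧸ Z) (k + 1)) =
        Subgroup.upperCentralSeries G (k + 2) := Subgroup.comap_upperCentralSeries_quotient_center (k + 1)
    have hZ : ⁅(⊤ : Subgroup G).lowerCentralSeries k, Subgroup.upperCentralSeries G (k + 2)⁆ ≤ Z := by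
      have hmap : Subgroup.map π ⁅(⊤ : Subgroup G).lowerCentralSeries k, Subgroup.upperCentralSeries G (k + 2)⁆ ≤ ⊥ := by
        rw [Subgroup.map_commutator]
        calc ⁅Subgroup.map π ((⊤ : Subgroup G).lowerCentralSeries k),
              Subgroup.map π (Subgroup.upperCentralSeries G (k + 2))⁆
            ≤ ⁅(⊤ : Subgroup (G ⧸ Z)).lowerCentralSeries k, Subgroup.upperCentralSeries (G ⧸ Z) (k + 1)⁆ :=
              Subgroup.commutator_mono (Subgroup.lowerCentralSeries.map π k)
                (by rw [← hcomap]; exact Subgroup.map_comap_le _ _)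
          _ = ⊥ := ih (G ⧸ Z)
      have hle := Subgroup.map_le_iff_le_comap.mp hmap
      rwa [MonoidHom.comap_bot, QuotientGroup.ker_mk'] at hle
    show ⁅⁅(⊤ : Subgroup G).lowerCentralSeries k, ⊤⁆, Subgroup.upperCentralSeries G (k + 2)⁆ = ⊥
    apply Subgroup.commutator_commutator_eq_bot_of_rotate
    · -- ⁅⁅⊤, Z_{k+2}⁆, γ_{k+1}⁆ = ⊥
      have hstep : ⁅Subgroup.upperCentralSeries G (k + 2), (⊤ : Subgroup G)⁆ ≤
          Subgroup.upperCentralSeries G (k + 1) := by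
        rw [Subgroup.commutator_le]
        intro x hx y _
        exact Subgroup.mem_upperCentralSeries_succ_iff.mp hx y
      refine le_bot_iff.mp ?_
      calc ⁅⁅(⊤ : Subgroup G), Subgroup.upperCentralSeries G (k + 2)⁆, (⊤ : Subgroup G).lowerCentralSeries k⁆
          ≤ ⁅Subgroup.upperCentralSeries G (k + 1), (⊤ : Subgroup G).lowerCentralSeries k⁆ :=
            Subgroup.commutator_mono (by rw [Subgroup.commutator_comm]; exact hstep) le_rfl
        _ = ⊥ := by rw [Subgroup.commutator_comm]; exact ih G
    · -- ⁅⁅Z_{k+2}, γ_{k+1}⁆, ⊤⁆ = ⊥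
      refine le_bot_iff.mp ?_
      calc ⁅⁅Subgroup.upperCentralSeries G (k + 2), (⊤ : Subgroup G).lowerCentralSeries k⁆, (⊤ : Subgroup G)⁆
          ≤ ⁅Z, (⊤ : Subgroup G)⁆ :=
            Subgroup.commutator_mono (by rw [Subgroup.commutator_comm]; exact hZ) le_rfl
        _ = ⊥ := by
            rw [Subgroup.commutator_eq_bot_iff_le_centralizer]
            exact Subgroup.center_le_centralizer _

/-- Key step: a normal subgroup `K` which is "abelian", centralized by a normal subgroup `U`
of finite index, and finite modulo the center, has finite `⁅K, ⊤⁆`. -/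
lemma finite_commutator_top {G : Type*} [Group G] (K U : Subgroup G) [K.Normal] [U.Normal]
    (habel : ⁅K, K⁆ = ⊥) (hcent : ⁅K, U⁆ = ⊥) (hU : Finite (G ⧸ U))
    (hKfin : Finite (K.map (QuotientGroup.mk' (Subgroup.center G)))) :
    Finite ↥(⁅K, (⊤ : Subgroup G)⁆) := by
  haveI := hU; haveI := hKfin
  set π := QuotientGroup.mk' (Subgroup.center G) with hπdef
  set m := Nat.card ↥(K.map π) with hmdef
  have hm : 0 < m := Nat.card_pos
  have hcomm : ∀ x ∈ K, ∀ y ∈ K, x * y = y * x := by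
    intro x hx y hy
    have h := Subgroup.commutator_eq_bot_iff_le_centralizer.mp habel
    exact Subgroup.mem_centralizer_iff.mp (h hy) x hx
  have hKmem : ∀ x ∈ K, ∀ g : G, ⁅x, g⁆ ∈ K := by
    intro x hx g
    have hrw : ⁅x, g⁆ = x * (g * x⁻¹ * g⁻¹) := by group
    rw [hrw]
    exact mul_mem hx (Subgroup.Normal.conj_mem ‹K.Normal› x⁻¹ (inv_mem hx) g)
  have hid : ∀ a b g : G, ⁅a * b, g⁆ = a * ⁅b, g⁆ * a⁻¹ * ⁅a, g⁆ := by
    intro a b g; group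
  have hpow : ∀ x ∈ K, ∀ (g : G) (n : ℕ), ⁅x, g⁆ ^ n = ⁅x ^ n, g⁆ := by
    intro x hx g n
    induction n with
    | zero => simp
    | succ n ihn =>
      rw [pow_succ, ihn, pow_succ']
      rw [hid x (x ^ n) g]
      have h1 : ⁅x ^ n, g⁆ ∈ K := hKmem _ (pow_mem hx n) g
      have h2 : x * ⁅x ^ n, g⁆ = ⁅x ^ n, g⁆ * x := hcomm x hx _ h1
      rw [show x * ⁅x ^ n, g⁆ * x⁻¹ = ⁅x ^ n, g⁆ from by rw [h2, mul_inv_cancel_right]]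
  have hxm : ∀ x ∈ K, x ^ m ∈ Subgroup.center G := by
    intro x hx
    have he : (⟨π x, Subgroup.mem_map_of_mem π hx⟩ : ↥(K.map π)) ^ m = 1 := by
      rw [hmdef]; exact pow_card_eq_one'
    have hπx : π (x ^ m) = 1 := by
      rw [map_pow]
      exact congrArg Subtype.val he
    rwa [← MonoidHom.mem_ker, QuotientGroup.ker_mk'] at hπx
  have htor : ∀ x ∈ K, ∀ g : G, ⁅x, g⁆ ^ m = 1 := by
    intro x hx g
    rw [hpow x hx g m]
    exact commutatorElement_eq_one_iff_commute.mpr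
      (((Subgroup.mem_center_iff.mp (hxm x hx)) g).symm)
  -- the subgroup of elements of `K` killed by `m`
  let T : Subgroup G :=
    { carrier := {x | x ∈ K ∧ x ^ m = 1}
      one_mem' := ⟨one_mem K, one_pow m⟩
      mul_mem' := by
        rintro a b ⟨ha, ha'⟩ ⟨hb, hb'⟩
        refine ⟨mul_mem ha hb, ?_⟩
        have hab : Commute a b := hcomm a ha b hb
        rw [hab.mul_pow, ha', hb', one_mul]
      inv_mem' := by
        rintro a ⟨ha, ha'⟩
        exact ⟨inv_mem ha, by rw [inv_pow, ha', inv_one]⟩ }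
  set S := {g : G | ∃ x ∈ K, ∃ y ∈ (⊤ : Subgroup G), ⁅x, y⁆ = g} with hSdef
  have hW : ⁅K, (⊤ : Subgroup G)⁆ = Subgroup.closure S := Subgroup.commutator_def _ _
  have hUle : U ≤ Subgroup.centralizer (K : Set G) := by
    rw [← Subgroup.commutator_eq_bot_iff_le_centralizer, Subgroup.commutator_comm]
    exact hcent
  have hSfin : S.Finite := by
    apply finite_commutator_pairs K ⊤ (Subgroup.centralizer (K : Set G))
    · intro c hc x hx
      exact (Subgroup.mem_centralizer_iff.mp hc x hx).symm
    · exact hKfin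
    · exact finite_quotient_subgroupOf ⊤ (Subgroup.centralizer (K : Set G)) U hUle
        inferInstance
  have hST : S ⊆ (T : Set G) := by
    rintro g ⟨x, hx, y, _, rfl⟩
    exact ⟨hKmem x hx y, htor x hx y⟩
  have hleT : ⁅K, (⊤ : Subgroup G)⁆ ≤ T := by
    rw [hW]; exact (Subgroup.closure_le T).mpr hST
  have hWK : ⁅K, (⊤ : Subgroup G)⁆ ≤ K := Subgroup.commutator_le_left _ _
  have hFG : Subgroup.FG ⁅K, (⊤ : Subgroup G)⁆ :=
    (Subgroup.fg_iff _).mpr ⟨S, hW.symm, hSfin⟩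
  letI : CommGroup ↥(⁅K, (⊤ : Subgroup G)⁆) :=
    { (inferInstance : Group ↥(⁅K, (⊤ : Subgroup G)⁆)) with
      mul_comm := fun a b => Subtype.ext (hcomm _ (hWK a.2) _ (hWK b.2)) }
  haveI : Group.FG ↥(⁅K, (⊤ : Subgroup G)⁆) := (Group.fg_iff_subgroup_fg _).mpr hFG
  have htors : Monoid.IsTorsion ↥(⁅K, (⊤ : Subgroup G)⁆) := by
    intro w
    refine isOfFinOrder_iff_pow_eq_one.mpr ⟨m, hm, ?_⟩
    apply Subtype.ext
    have hw : (w : G) ^ m = 1 := (hleT w.2).2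
    simpa using hw
  exact CommGroup.finite_of_fg_torsion _ htors

/-- Baer's theorem: if `G / Z_k(G)` is finite, then `γ_{k+1}(G)` is finite. -/
lemma baer_finite_lcs (k : ℕ) :
    ∀ (G : Type u) [Group G], Finite (G ⧸ Subgroup.upperCentralSeries G k) →
      Finite ((⊤ : Subgroup G).lowerCentralSeries k) := by
  induction k with
  | zero =>
    intro G _ h
    have h0 : Finite (G ⧸ (⊥ : Subgroup G)) := h
    have : Finite G := Finite.of_equiv _ (QuotientGroup.quotientBot (G := G)).toEquiv
    infer_instance
  | succ k ih =>
    intro G _ hfin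
    haveI := hfin
    set Z := Subgroup.center G
    set π := QuotientGroup.mk' Z with hπdef
    have hπs : Function.Surjective π := QuotientGroup.mk'_surjective Z
    have hcomap : Subgroup.comap π (Subgroup.upperCentralSeries (G ⧸ Z) k) =
        Subgroup.upperCentralSeries G (k + 1) := Subgroup.comap_upperCentralSeries_quotient_center k
    have hq : Finite ((G ⧸ Z) ⧸ Subgroup.upperCentralSeries (G ⧸ Z) k) :=
      finite_quotient_map π hπs (Subgroup.upperCentralSeries G (k + 1)) _ hcomap.ge hfin
    have hK' : Finite ((⊤ : Subgroup (G ⧸ Z)).lowerCentralSeries k) := ih (G ⧸ Z) hq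
    set K := (⊤ : Subgroup G).lowerCentralSeries k with hKdef
    have hmapK : K.map π = (⊤ : Subgroup (G ⧸ Z)).lowerCentralSeries k := _root_.map_lowerCentralSeries π hπs k
    have hKmapfin : Finite (K.map π) := by rw [hmapK]; exact hK'
    -- Schur: ⁅K, K⁆ is finite
    haveI hcsK : Finite (commutatorSet ↥K) := by
      have h2K : Finite (↥K ⧸ (Subgroup.centralizer (K : Set G)).subgroupOf K) :=
        finite_quotient_subgroupOf K (Subgroup.centralizer (K : Set G)) Z
          (Subgroup.center_le_centralizer _) hKmapfin
      have hpairs : {g : G | ∃ x ∈ K, ∃ y ∈ K, ⁅x, y⁆ = g}.Finite := by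
        apply finite_commutator_pairs K K (Subgroup.centralizer (K : Set G))
        · intro c hc x hx
          exact (Subgroup.mem_centralizer_iff.mp hc x hx).symm
        · exact hKmapfin
        · exact h2K
      have himg : Subtype.val '' (commutatorSet ↥K) ⊆
          {g : G | ∃ x ∈ K, ∃ y ∈ K, ⁅x, y⁆ = g} := by
        rintro _ ⟨g, ⟨a, b, rfl⟩, rfl⟩
        exact ⟨a, a.2, b, b.2, rfl⟩
      have hfin2 : (commutatorSet ↥K).Finite :=
        Set.Finite.of_finite_image (hpairs.subset himg) Subtype.val_injective.injOn
      exact hfin2.to_subtype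
    haveI hK2fin : Finite (_root_.commutator ↥K) := inferInstance
    have hmap2 : Subgroup.map K.subtype (_root_.commutator ↥K) = ⁅K, K⁆ := by
      rw [commutator_def, Subgroup.map_commutator, ← MonoidHom.range_eq_map,
        Subgroup.range_subtype]
    have hKKfin : Finite ↥(⁅K, K⁆) := by
      rw [← hmap2]
      exact finite_subgroup_map _ _ hK2fin
    -- pass to the quotient by ⁅K, K⁆
    set K₂ := ⁅K, K⁆ with hK₂def
    haveI : K₂.Normal := Subgroup.commutator_normal K K
    set ρ := QuotientGroup.mk' K₂ with hρdef
    have hρs : Function.Surjective ρ := QuotientGroup.mk'_surjective K₂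
    set Kb := K.map ρ with hKbdef
    haveI : Kb.Normal := Subgroup.Normal.map inferInstance ρ hρs
    set U := (Subgroup.upperCentralSeries G (k + 1)).map ρ with hUdef
    haveI : U.Normal := Subgroup.Normal.map inferInstance ρ hρs
    have habel : ⁅Kb, Kb⁆ = ⊥ := by
      rw [hKbdef, ← Subgroup.map_commutator, ← hK₂def, Subgroup.map_eq_bot_iff,
        hρdef, QuotientGroup.ker_mk']
    have hcent : ⁅Kb, U⁆ = ⊥ := by
      rw [hKbdef, hUdef, ← Subgroup.map_commutator]
      have hD : ⁅K, Subgroup.upperCentralSeries G (k + 1)⁆ = ⊥ := commutator_lcs_ucs_eq_bot k G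
      rw [hD, Subgroup.map_bot]
    have hUq : Finite ((G ⧸ K₂) ⧸ U) :=
      finite_quotient_map ρ hρs (Subgroup.upperCentralSeries G (k + 1)) U
        (Subgroup.le_comap_map _ _) hfin
    have hKc : Finite (Kb.map (QuotientGroup.mk' (Subgroup.center (G ⧸ K₂)))) := by
      have hcent_le : Z ≤ Subgroup.comap ρ (Subgroup.center (G ⧸ K₂)) := by
        intro z hz
        rw [Subgroup.mem_comap]
        rw [Subgroup.mem_center_iff]
        intro q
        obtain ⟨g, rfl⟩ := hρs q
        rw [← map_mul, ← map_mul, Subgroup.mem_center_iff.mp hz g]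
      let ψ : (G ⧸ Z) →* ((G ⧸ K₂) ⧸ Subgroup.center (G ⧸ K₂)) :=
        QuotientGroup.map Z (Subgroup.center (G ⧸ K₂)) ρ hcent_le
      have key : Kb.map (QuotientGroup.mk' (Subgroup.center (G ⧸ K₂))) =
          (K.map π).map ψ := by
        rw [hKbdef, Subgroup.map_map, Subgroup.map_map]
        congr 1
      rw [key]
      exact finite_subgroup_map _ _ hKmapfin
    have hWbar : Finite ↥(⁅Kb, (⊤ : Subgroup (G ⧸ K₂))⁆) :=
      finite_commutator_top Kb U habel hcent hUq hKc
    -- lift back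
    have hkerρ : ρ.ker = K₂ := QuotientGroup.ker_mk' K₂
    have hker_le : ρ.ker ≤ ⁅K, (⊤ : Subgroup G)⁆ := by
      rw [hkerρ, hK₂def]
      exact Subgroup.commutator_mono le_rfl le_top
    have hmapW : (⁅K, (⊤ : Subgroup G)⁆.map ρ) = ⁅Kb, (⊤ : Subgroup (G ⧸ K₂))⁆ := by
      rw [Subgroup.map_commutator, Subgroup.map_top_of_surjective ρ hρs, hKbdef]
    have hgoal : Finite ↥(⁅K, (⊤ : Subgroup G)⁆) := by
      apply finite_of_finite_ker_of_finite_map ρ ?_ hker_le ?_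
      · rw [hkerρ]; exact hKKfin
      · rw [hmapW]; exact hWbar
    exact hgoal

end UpperLower

/-- Let `F` be a free group and `R` a normal subgroup of `F` with `F ⧸ R` finite, and
`k ≥ 1`. Then the `k`-nilpotent multiplier `(R ∩ γ_{k+1}(F)) / γ_{k+1}(R, F)` of `F ⧸ R`
is finite. -/
theorem finite_nilpotentMultiplier_of_finite_quotient
    {F : Type*} [Group F] [IsFreeGroup F] (R : Subgroup F) [R.Normal]
    (hfin : Finite (F ⧸ R)) (k : ℕ) (hk : 1 ≤ k) :
    Finite ((R ⊓ (⊤ : Subgroup F).lowerCentralSeries k : Subgroup F) ⧸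
      (relLowerCentralSeries R k).subgroupOf (R ⊓ (⊤ : Subgroup F).lowerCentralSeries k)) := by
  classical
  set N := relLowerCentralSeries R k with hNdef
  haveI : N.Normal := relLowerCentralSeries_normal R k
  set ρ := QuotientGroup.mk' N with hρdef
  have hρs : Function.Surjective ρ := QuotientGroup.mk'_surjective N
  have hkerρ : ρ.ker = N := QuotientGroup.ker_mk' N
  -- the image of R lies in the k-th upper central series of F ⧸ N
  have hmapN : (relLowerCentralSeries (R.map ρ) k) = ⊥ := by
    rw [← map_relLowerCentralSeries ρ hρs R k, ← hNdef, Subgroup.map_eq_bot_iff, hkerρ]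
  have hRbar : R.map ρ ≤ Subgroup.upperCentralSeries (F ⧸ N) k :=
    le_upperCentralSeries_of_relLowerCentralSeries_eq_bot k _ hmapN
  -- hence F ⧸ N has finite quotient by its upper central series
  have hQfin : Finite ((F ⧸ N) ⧸ Subgroup.upperCentralSeries (F ⧸ N) k) :=
    finite_quotient_map ρ hρs R (Subgroup.upperCentralSeries (F ⧸ N) k)
      (Subgroup.map_le_iff_le_comap.mp hRbar) hfin
  -- Baer's theorem
  have hlcs : Finite ((⊤ : Subgroup (F ⧸ N)).lowerCentralSeries k) := baer_finite_lcs k (F ⧸ N) hQfin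
  -- embed the given quotient into lowerCentralSeries (F ⧸ N) k
  set W := R ⊓ (⊤ : Subgroup F).lowerCentralSeries k with hWdef
  let ψ : ↥W →* F ⧸ N := ρ.comp W.subtype
  have hkerψ : ψ.ker = N.subgroupOf W := by
    show (ρ.comp W.subtype).ker = N.subgroupOf W
    rw [← MonoidHom.comap_ker, hkerρ]
    rfl
  have hrange : ψ.range ≤ (⊤ : Subgroup (F ⧸ N)).lowerCentralSeries k := by
    have h1 : ψ.range = W.map ρ := by
      show (ρ.comp W.subtype).range = W.map ρ
      rw [MonoidHom.range_comp, Subgroup.range_subtype]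
    rw [h1]
    calc W.map ρ ≤ ((⊤ : Subgroup F).lowerCentralSeries k).map ρ :=
          Subgroup.map_mono (by rw [hWdef]; exact inf_le_right)
      _ ≤ (⊤ : Subgroup (F ⧸ N)).lowerCentralSeries k := Subgroup.lowerCentralSeries.map ρ k
  have hrangefin : Finite ψ.range := finite_subgroup_of_le hlcs hrange
  have hequiv : Finite (↥W ⧸ ψ.ker) :=
    Finite.of_equiv _ (QuotientGroup.quotientKerEquivRange ψ).symm.toEquiv
  rw [hkerψ] at hequiv
  exact hequiv
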